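/- Let λ* > 0 with J_ν(√λ*) = 0, Y_ν(√λ*) ≠ 0, ν > 1/2. For the function G(δ, λ) = J_ν(√λ)/Y_ν(√λ) − J_ν(δ^{1/(2ν)}√λ)/Y_ν(δ^{1/(2ν)}√λ) (extended continuously to δ = 0 by G(0,λ) = J_ν(√λ)/Y_ν(√λ)), the partial derivatives at (0, λ*) are ∂G/∂λ = −1/(π λ* Y_ν(√λ*)²) and ∂G/∂δ = (π/(ν Γ(ν)²)) (λ*/4)^ν. -/

import Mathlib

open Real Filter Topology

/-- partial derivatives of
`G(δ, λ) = J_ν(√λ)/Y_ν(√λ) - J_ν(δ^{1/(2ν)}√λ)/Y_ν(δ^{1/(2ν)}√λ)`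
(extended to `δ = 0` by `G(0,λ) = J_ν(√λ)/Y_ν(√λ)`) at the point `(0, λ*)`:
`∂G/∂λ = -1/(π λ* Y_ν(√λ*)²)` and `∂G/∂δ = (π/(ν Γ(ν)²)) (λ*/4)^ν`.
Here `J` and `Y` are the Bessel functions of order `ν`, characterized by the
small-argument asymptotics and the derivative formula
`d/dt (J(t)/Y(t)) = -2/(π t Y(t)²)`. -/
theorem G_partial_derivatives (ν : ℝ) (hν : 1 / 2 < ν) (J Y : ℝ → ℝ)
    (hJsmooth : ContDiffOn ℝ 1 J (Set.Ioi 0)) (hYsmooth : ContDiffOn ℝ 1 Y (Set.Ioi 0))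
    (hJasymp : Tendsto (fun t => J t / ((t / 2) ^ ν / Real.Gamma (ν + 1)))
      (nhdsWithin 0 (Set.Ioi 0)) (nhds 1))
    (hYasymp : Tendsto (fun t => Y t / (-(Real.Gamma ν / π) * (2 / t) ^ ν))
      (nhdsWithin 0 (Set.Ioi 0)) (nhds 1))
    (hratio : ∀ t > (0 : ℝ), Y t ≠ 0 →
      HasDerivAt (fun s => J s / Y s) (-2 / (π * t * (Y t) ^ 2)) t)
    (lamStar : ℝ) (hlam : 0 < lamStar)
    (hJz : J (Real.sqrt lamStar) = 0) (hYz : Y (Real.sqrt lamStar) ≠ 0)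
    (G : ℝ → ℝ → ℝ)
    (hG0 : ∀ μ : ℝ, G 0 μ = J (Real.sqrt μ) / Y (Real.sqrt μ))
    (hG : ∀ δ > (0 : ℝ), ∀ μ : ℝ, G δ μ =
      J (Real.sqrt μ) / Y (Real.sqrt μ) -
        J (δ ^ (1 / (2 * ν)) * Real.sqrt μ) / Y (δ ^ (1 / (2 * ν)) * Real.sqrt μ)) :
    HasDerivAt (fun μ => G 0 μ) (-1 / (π * lamStar * (Y (Real.sqrt lamStar)) ^ 2)) lamStar ∧
    HasDerivWithinAt (fun δ => G δ lamStar)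
      (π / (ν * (Real.Gamma ν) ^ 2) * (lamStar / 4) ^ ν) (Set.Ici 0) 0 := by
  have hν0 : (0:ℝ) < ν := lt_trans (by norm_num) hν
  have hΓ : 0 < Real.Gamma ν := Real.Gamma_pos_of_pos hν0
  have hc : 0 < Real.sqrt lamStar := Real.sqrt_pos.mpr hlam
  have hπ : (0:ℝ) < π := Real.pi_pos
  set c := Real.sqrt lamStar with hcdef
  constructor
  · -- λ-derivative
    have hd := (hratio c hc hYz).comp lamStar (Real.hasDerivAt_sqrt hlam.ne')
    have heq : (fun μ => G 0 μ) = fun μ => J (Real.sqrt μ) / Y (Real.sqrt μ) := funext hG0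
    rw [heq]
    refine HasDerivAt.congr_deriv hd ?_
    have hcc : c * c = lamStar := Real.mul_self_sqrt hlam.le
    rw [show Real.sqrt lamStar = c from rfl]
    rw [← hcc]
    field_simp
  · -- δ-derivative
    set L := π / (ν * Real.Gamma ν ^ 2) * (lamStar / 4) ^ ν with hLdef
    set p := 1 / (2 * ν) with hpdef
    have hp : 0 < p := by positivity
    set t : ℝ → ℝ := fun δ => δ ^ p * c with htdef
    set A : ℝ → ℝ := fun s => (s / 2) ^ ν / Real.Gamma (ν + 1) with hAdef
    set B : ℝ → ℝ := fun s => -(Real.Gamma ν / π) * (2 / s) ^ ν with hBdef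
    -- t tends to 0 within Ioi 0
    have ht0 : Tendsto t (𝓝[>] (0:ℝ)) (𝓝[>] (0:ℝ)) := by
      rw [tendsto_nhdsWithin_iff]
      constructor
      · have h1 : Tendsto (fun δ : ℝ => δ ^ p) (𝓝 (0:ℝ)) (𝓝 ((0:ℝ) ^ p)) :=
          (Real.continuousAt_rpow_const 0 p (Or.inr hp.le)).tendsto
        rw [Real.zero_rpow hp.ne'] at h1
        have h2 : Tendsto (fun δ : ℝ => δ ^ p * c) (𝓝[>] (0:ℝ)) (𝓝 (0 * c)) :=
          (h1.mono_left (nhdsWithin_le_nhds (s := Set.Ioi 0))).mul_const c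
        simpa using h2
      · filter_upwards [self_mem_nhdsWithin] with δ (hδ : 0 < δ)
        exact mul_pos (Real.rpow_pos_of_pos hδ p) hc
    -- key algebraic identity: A (t δ) / B (t δ) = -L * δ for δ > 0
    have hAB : ∀ δ : ℝ, 0 < δ → A (t δ) / B (t δ) = -L * δ := by
      intro δ hδ
      have htpos : 0 < t δ := mul_pos (Real.rpow_pos_of_pos hδ p) hc
      have htν : (t δ) ^ ν = δ ^ (1/2 : ℝ) * c ^ ν := by
        rw [htdef]
        simp only
        rw [Real.mul_rpow (Real.rpow_pos_of_pos hδ p).le hc.le,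
          ← Real.rpow_mul hδ.le]
        congr 2
        rw [hpdef]; field_simp
      have h2ν : (2:ℝ) ^ ν * 2 ^ ν = 4 ^ ν := by
        rw [← Real.mul_rpow (by norm_num) (by norm_num)]; norm_num
      have hcν : c ^ ν * c ^ ν = lamStar ^ ν := by
        rw [← Real.mul_rpow hc.le hc.le, Real.mul_self_sqrt hlam.le]
      have hδν : δ ^ (1/2:ℝ) * δ ^ (1/2:ℝ) = δ := by
        rw [← Real.rpow_add hδ]; norm_num
      have key : (t δ) ^ ν * (t δ) ^ ν = δ * lamStar ^ ν := by
        rw [htν, mul_mul_mul_comm, hδν, hcν]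
      have hdiv1 : (t δ / 2) ^ ν = (t δ) ^ ν / 2 ^ ν := div_rpow htpos.le (by norm_num) ν
      have hdiv2 : ((2:ℝ) / t δ) ^ ν = 2 ^ ν / (t δ) ^ ν := div_rpow (by norm_num) htpos.le ν
      have hΓ1 : Real.Gamma (ν + 1) = ν * Real.Gamma ν := Real.Gamma_add_one hν0.ne'
      have h2pos : (0:ℝ) < (2:ℝ) ^ ν := Real.rpow_pos_of_pos (by norm_num) ν
      have htνpos : (0:ℝ) < (t δ) ^ ν := Real.rpow_pos_of_pos htpos ν
      have hlamdiv : (lamStar / 4) ^ ν = lamStar ^ ν / 4 ^ ν := div_rpow hlam.le (by norm_num) ν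
      rw [hAdef, hBdef, hLdef]
      simp only
      rw [hdiv1, hdiv2, hΓ1, hlamdiv]
      field_simp
      linear_combination (-(4:ℝ) ^ ν) * key +
        (δ * lamStar ^ ν) * h2ν
    have h1 : Tendsto (fun δ => J (t δ) / A (t δ)) (𝓝[>] (0:ℝ)) (𝓝 1) := hJasymp.comp ht0
    have h2 : Tendsto (fun δ => Y (t δ) / B (t δ)) (𝓝[>] (0:ℝ)) (𝓝 1) := hYasymp.comp ht0
    have hYne : ∀ᶠ δ in 𝓝[>] (0:ℝ), Y (t δ) ≠ 0 := by
      filter_upwards [h2.eventually_ne one_ne_zero] with δ h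
      intro h0; apply h; rw [h0]; simp
    rw [hasDerivWithinAt_iff_tendsto_slope, Set.Ici_sdiff_left]
    have hG00 : G 0 lamStar = 0 := by rw [hG0, ← hcdef, hJz, zero_div]
    have hlim : Tendsto (fun δ => -(J (t δ) / A (t δ)) * (Y (t δ) / B (t δ))⁻¹ * (-L))
        (𝓝[>] (0:ℝ)) (𝓝 L) := by
      have := (h1.neg.mul (h2.inv₀ one_ne_zero)).mul_const (-L)
      simpa using this
    have genJY : ∀ j y a b : ℝ, a ≠ 0 → b ≠ 0 → y ≠ 0 →
        j / y = (j / a) * (y / b)⁻¹ * (a / b) := by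
      intro j y a b ha hb hy
      field_simp
    have genFinal : ∀ u v d : ℝ, d ≠ 0 → -(u * v * (-L * d)) / d = -u * v * (-L) := by
      intro u v d hd
      field_simp
    refine hlim.congr' ?_
    filter_upwards [self_mem_nhdsWithin, hYne] with δ (hδ : 0 < δ) hY
    have htpos : 0 < t δ := mul_pos (Real.rpow_pos_of_pos hδ p) hc
    have hApos : 0 < A (t δ) := by
      rw [hAdef]; simp only
      exact div_pos (Real.rpow_pos_of_pos (by positivity) ν)
        (Real.Gamma_pos_of_pos (by linarith))
    have hBneg : B (t δ) < 0 := by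
      rw [hBdef]; simp only
      have h1 : 0 < (2 / t δ) ^ ν := Real.rpow_pos_of_pos (by positivity) ν
      have h2 : 0 < Real.Gamma ν / π := div_pos hΓ hπ
      nlinarith
    rw [slope_def_field, hG00, hG δ hδ lamStar, ← hcdef, hJz, zero_div, zero_sub, sub_zero,
      sub_zero]
    have htδ : δ ^ (1 / (2 * ν)) * c = t δ := rfl
    rw [htδ, genJY (J (t δ)) (Y (t δ)) (A (t δ)) (B (t δ)) hApos.ne' hBneg.ne hY,
      hAB δ hδ, genFinal _ _ _ hδ.ne']
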